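/- (Minimization version.) Let x̂ solve: minimize f_0(x) over x ∈ Ω with f_i(x) ≤ 0 for i = 1,…,m. Assume each f_j with f_j(x̂) < 0 is upper semicontinuous at x̂, and each f_i is D^+_M-differentiable at x̂. Then there exist λ^0,…,λ^m ≥ 0, not all zero, with λ^i f_i(x̂) = 0 for i = 1,…,m, and Σ_{i=0}^m λ^i D^+_M f_i(x̂)(u) ≥ 0 for all u ∈ E. -/

import Mathlib

open Filter Topology

variable {E : Type*} [NormedAddCommGroup E] [NormedSpace ℝ E]

/-- Difference quotient of `f` at `x` in direction `u`. -/
noncomputable def diniQuot (f : E → ℝ) (x u : E) : ℝ → ℝ :=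
  fun t => (f (x + t • u) - f x) / t

/-- Lower Dini derivative `D⁻ f(x)(u)`. -/
noncomputable def lowerDini (f : E → ℝ) (x u : E) : ℝ :=
  liminf (diniQuot f x u) (𝓝[>] 0)

/-- Upper Dini derivative `D⁺ f(x)(u)`. -/
noncomputable def upperDini (f : E → ℝ) (x u : E) : ℝ :=
  limsup (diniQuot f x u) (𝓝[>] 0)

/-- Modified lower Dini derivative `D⁻_M f(x)(u)`. -/
noncomputable def lowerDiniM (f : E → ℝ) (x u : E) : ℝ :=
  ⨅ w : E, (lowerDini f x (u + w) - lowerDini f x w)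

/-- Modified upper Dini derivative `D⁺_M f(x)(u)`. -/
noncomputable def upperDiniM (f : E → ℝ) (x u : E) : ℝ :=
  ⨆ w : E, (upperDini f x (u + w) - upperDini f x w)

/-- The difference quotients of `f` at `x` in direction `u` are bounded near `0⁺`,
so that the lower/upper Dini derivatives are genuine (finite) values. -/
def DiniFinite (f : E → ℝ) (x u : E) : Prop :=
  IsBoundedUnder (· ≤ ·) (𝓝[>] (0:ℝ)) (diniQuot f x u) ∧
  IsBoundedUnder (· ≥ ·) (𝓝[>] (0:ℝ)) (diniQuot f x u)

/-- Finiteness of the modified lower Dini derivative. -/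
def LowerDiniMFinite (f : E → ℝ) (x u : E) : Prop :=
  BddBelow (Set.range fun w : E => lowerDini f x (u + w) - lowerDini f x w)

/-- Finiteness of the modified upper Dini derivative. -/
def UpperDiniMFinite (f : E → ℝ) (x u : E) : Prop :=
  BddAbove (Set.range fun w : E => upperDini f x (u + w) - upperDini f x w)

lemma map_mul_pos_nhdsGT (c : ℝ) (hc : 0 < c) :
    Filter.map (fun t => c * t) (𝓝[>] (0:ℝ)) = 𝓝[>] (0:ℝ) := by
  have h := (Homeomorph.mulLeft₀ c hc.ne').isEmbedding.map_nhdsWithin_eq (Set.Ioi (0:ℝ)) 0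
  simp only [Homeomorph.coe_mulLeft₀, mul_zero] at h
  rw [h]
  congr 1
  ext y
  constructor
  · rintro ⟨z, hz, rfl⟩; exact mul_pos hc hz
  · intro hy; exact ⟨c⁻¹ * y, mul_pos (inv_pos.2 hc) hy, by field_simp⟩

lemma upperDini_zero (f : E → ℝ) (x : E) : upperDini f x 0 = 0 := by
  have : diniQuot f x 0 = fun _ => (0:ℝ) := by
    funext t; simp [diniQuot]
  rw [upperDini, this, limsup_const]

lemma upperDini_smul (f : E → ℝ) (x u : E) (c : ℝ) (hc : 0 < c)
    (hfin : DiniFinite f x u) : upperDini f x (c • u) = c * upperDini f x u := by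
  have hq : diniQuot f x (c • u) = (fun s => c * diniQuot f x u s) ∘ (fun t => c * t) := by
    funext t
    simp only [diniQuot, Function.comp_apply, smul_smul]
    rcases eq_or_ne t 0 with rfl | ht
    · simp
    · rw [mul_comm t c]; field_simp
  have hstep : limsup ((fun s => c * diniQuot f x u s) ∘ fun t => c * t) (𝓝[>] (0:ℝ))
      = limsup (fun s => c * diniQuot f x u s) (Filter.map (fun t => c * t) (𝓝[>] (0:ℝ))) := by
    simp only [Filter.limsup, Filter.map_map]
  rw [upperDini, hq, hstep, map_mul_pos_nhdsGT c hc]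
  exact (Monotone.map_limsup_of_continuousAt (f := fun s => c * s)
    (fun a b hab => mul_le_mul_of_nonneg_left hab hc.le) (diniQuot f x u)
    (continuous_const.mul continuous_id).continuousAt hfin.1
    hfin.2.isCoboundedUnder_flip).symm

lemma le_upperDiniM (f : E → ℝ) (x u : E) (hM : UpperDiniMFinite f x u) :
    upperDini f x u ≤ upperDiniM f x u := by
  have h := le_ciSup hM 0
  simp only [add_zero, upperDini_zero, sub_zero] at h
  exact h

lemma upperDiniM_zero (f : E → ℝ) (x : E) : upperDiniM f x 0 = 0 := by
  simp [upperDiniM]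

lemma upperDiniM_add_le (f : E → ℝ) (x u v : E)
    (hM : ∀ u, UpperDiniMFinite f x u) :
    upperDiniM f x (u + v) ≤ upperDiniM f x u + upperDiniM f x v := by
  refine ciSup_le fun w => ?_
  have h1 : upperDini f x (u + (v + w)) - upperDini f x (v + w) ≤ upperDiniM f x u :=
    le_ciSup (hM u) (v + w)
  have h2 : upperDini f x (v + w) - upperDini f x w ≤ upperDiniM f x v :=
    le_ciSup (hM v) w
  have : u + v + w = u + (v + w) := add_assoc u v w
  rw [this]
  linarith

lemma upperDiniM_smul (f : E → ℝ) (x u : E) (c : ℝ) (hc : 0 < c)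
    (hfin : ∀ v, DiniFinite f x v) (hM : ∀ v, UpperDiniMFinite f x v) :
    upperDiniM f x (c • u) = c * upperDiniM f x u := by
  have hsurj : Function.Surjective (fun w : E => c • w) :=
    fun w => ⟨c⁻¹ • w, by simp [smul_smul, mul_inv_cancel₀ hc.ne']⟩
  have key : ∀ w : E, upperDini f x (c • u + c • w) - upperDini f x (c • w)
      = c * (upperDini f x (u + w) - upperDini f x w) := by
    intro w
    rw [← smul_add, upperDini_smul f x (u + w) c hc (hfin _), upperDini_smul f x w c hc (hfin _)]
    ring
  calc upperDiniM f x (c • u)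
      = ⨆ w : E, (upperDini f x (c • u + c • w) - upperDini f x (c • w)) :=
        (hsurj.iSup_comp _).symm
    _ = ⨆ w : E, c * (upperDini f x (u + w) - upperDini f x w) := by
        exact iSup_congr key
    _ = c * upperDiniM f x u := by
        refine (Monotone.map_ciSup_of_continuousAt (f := fun s => c * s)
          (continuous_const.mul continuous_id).continuousAt
          (fun a b hab => mul_le_mul_of_nonneg_left hab hc.le) (hM u)).symm

/-- minimization version: if `xh` minimizes `f 0` over
`{x ∈ Ω : f i x ≤ 0, 1 ≤ i ≤ m}`, the inactive constraints are upper
semicontinuous at `xh`, and all functions are `D⁺_M`-differentiable at `xh`,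
then nonnegative multipliers, not all zero, exist with complementary
slackness and `∑ i, lam i * D⁺_M f_i(xh)(u) ≥ 0` for all `u`. -/
theorem john_dini_min (m : ℕ) (Ω : Set E) (hΩ : IsOpen Ω) (hΩne : Ω.Nonempty)
    (f : Fin (m + 1) → E → ℝ) (xh : E) (hx : xh ∈ Ω)
    (hfeas : ∀ i : Fin (m + 1), i ≠ 0 → f i xh ≤ 0)
    (hmin : ∀ x ∈ Ω, (∀ i : Fin (m + 1), i ≠ 0 → f i x ≤ 0) → f 0 xh ≤ f 0 x)
    (husc : ∀ i : Fin (m + 1), i ≠ 0 → f i xh < 0 → UpperSemicontinuousAt (f i) xh)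
    (hfin : ∀ i u, DiniFinite (f i) xh u)
    (hMfin : ∀ i u, UpperDiniMFinite (f i) xh u) :
    ∃ lam : Fin (m + 1) → ℝ,
      (∀ i, 0 ≤ lam i) ∧ lam ≠ 0 ∧
      (∀ i : Fin (m + 1), i ≠ 0 → lam i * f i xh = 0) ∧
      ∀ u : E, 0 ≤ ∑ i, lam i * upperDiniM (f i) xh u := by
  classical
  set M : Fin (m + 1) → E → ℝ := fun i => upperDiniM (f i) xh with hMdef
  set A : Finset (Fin (m + 1)) := Finset.univ.filter (fun i => i = 0 ∨ f i xh = 0) with hA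
  have hmemA : ∀ i, i ∈ A ↔ (i = 0 ∨ f i xh = 0) := by
    intro i; simp [hA]
  have h0A : (0 : Fin (m + 1)) ∈ A := (hmemA 0).2 (Or.inl rfl)
  -- Step 1: incompatibility
  have hincomp : ∀ u : E, ∃ i ∈ A, 0 ≤ M i u := by
    intro u
    by_contra hcon
    push_neg at hcon
    have hg : ∀ i ∈ A, upperDini (f i) xh u < 0 := fun i hi =>
      lt_of_le_of_lt (le_upperDiniM _ _ _ (hMfin i u)) (hcon i hi)
    have htend : Tendsto (fun t : ℝ => xh + t • u) (𝓝[>] 0) (𝓝 xh) := by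
      have hc : Continuous fun t : ℝ => xh + t • u := by continuity
      exact tendsto_nhdsWithin_of_tendsto_nhds (hc.tendsto' 0 xh (by simp))
    have hΩev : ∀ᶠ t in 𝓝[>] (0:ℝ), xh + t • u ∈ Ω := htend (hΩ.mem_nhds hx)
    have hQ : ∀ i : Fin (m + 1), ∀ᶠ t in 𝓝[>] (0:ℝ),
        (i ∈ A → f i (xh + t • u) < f i xh) ∧ (i ∉ A → f i (xh + t • u) < 0) := by
      intro i
      by_cases hi : i ∈ A
      · have hlt : ∀ᶠ t in 𝓝[>] (0:ℝ), diniQuot (f i) xh u t < 0 :=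
          eventually_lt_of_limsup_lt (hg i hi) (hfin i u).1
        have hpos : ∀ᶠ t in 𝓝[>] (0:ℝ), (0:ℝ) < t := self_mem_nhdsWithin
        filter_upwards [hlt, hpos] with t hq ht
        refine ⟨fun _ => ?_, fun h => absurd hi h⟩
        have := mul_neg_of_neg_of_pos hq ht
        rw [diniQuot, div_mul_cancel₀ _ ht.ne'] at this
        linarith
      · have hi' : i ≠ 0 := by
          intro h; exact hi ((hmemA i).2 (Or.inl h))
        have hlt0 : f i xh < 0 :=
          lt_of_le_of_ne (hfeas i hi') (fun h => hi ((hmemA i).2 (Or.inr h)))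
        have := (husc i hi' hlt0) 0 hlt0
        have hev := htend.eventually this
        filter_upwards [hev] with t ht
        exact ⟨fun h => absurd h hi, fun _ => ht⟩
    have hall : ∀ᶠ t in 𝓝[>] (0:ℝ), (xh + t • u ∈ Ω) ∧ ∀ i : Fin (m + 1),
        (i ∈ A → f i (xh + t • u) < f i xh) ∧ (i ∉ A → f i (xh + t • u) < 0) :=
      hΩev.and (eventually_all.2 hQ)
    obtain ⟨t, htΩ, htf⟩ := hall.exists
    have hfeas' : ∀ i : Fin (m + 1), i ≠ 0 → f i (xh + t • u) ≤ 0 := by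
      intro i hi0
      by_cases hi : i ∈ A
      · rcases (hmemA i).1 hi with h | h
        · exact absurd h hi0
        · exact le_of_lt (h ▸ (htf i).1 hi)
      · exact le_of_lt ((htf i).2 hi)
    have h1 := hmin _ htΩ hfeas'
    have h2 := (htf 0).1 h0A
    linarith
  -- Step 2: separation
  set C : Set (Fin (m + 1) → ℝ) := {y | ∃ u : E, ∀ i ∈ A, M i u < y i} with hC
  have h0C : (0 : Fin (m + 1) → ℝ) ∉ C := by
    rintro ⟨u, hu⟩
    obtain ⟨i, hi, hle⟩ := hincomp u
    exact absurd (hu i hi) (not_lt.2 hle)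
  have hmem : ∀ z : Fin (m + 1) → ℝ, (∀ i ∈ A, 0 < z i) → z ∈ C := by
    intro z hz
    exact ⟨0, fun i hi => by simpa [hMdef, upperDiniM_zero] using hz i hi⟩
  have hCopen : IsOpen C := by
    have hCeq : C = ⋃ u : E, ⋂ i : Fin (m + 1), {y | i ∈ A → M i u < y i} := by
      ext y
      simp [hC, Set.mem_iUnion, Set.mem_iInter]
    rw [hCeq]
    refine isOpen_iUnion fun u => isOpen_iInter_of_finite fun i => ?_
    by_cases hi : i ∈ A
    · have : {y : Fin (m + 1) → ℝ | i ∈ A → M i u < y i}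
          = (fun y : Fin (m + 1) → ℝ => y i) ⁻¹' Set.Ioi (M i u) := by
        ext y; simp [hi]
      rw [this]
      exact isOpen_Ioi.preimage (continuous_apply i)
    · have : {y : Fin (m + 1) → ℝ | i ∈ A → M i u < y i} = Set.univ := by
        ext y; simp [hi]
      rw [this]; exact isOpen_univ
  have hCconv : Convex ℝ C := by
    rintro y1 ⟨u1, hu1⟩ y2 ⟨u2, hu2⟩ a b ha hb hab
    rcases eq_or_lt_of_le ha with rfl | ha'
    · have hb1 : b = 1 := by linarith
      subst hb1; simpa using ⟨u2, hu2⟩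
    rcases eq_or_lt_of_le hb with rfl | hb'
    · have ha1 : a = 1 := by linarith
      subst ha1; simpa using ⟨u1, hu1⟩
    refine ⟨a • u1 + b • u2, fun i hi => ?_⟩
    have h1 : M i (a • u1 + b • u2) ≤ M i (a • u1) + M i (b • u2) :=
      upperDiniM_add_le (f i) xh _ _ (hMfin i)
    have h2 : M i (a • u1) = a * M i u1 :=
      upperDiniM_smul (f i) xh u1 a ha' (hfin i) (hMfin i)
    have h3 : M i (b • u2) = b * M i u2 :=
      upperDiniM_smul (f i) xh u2 b hb' (hfin i) (hMfin i)
    have h4 : a * M i u1 < a * y1 i := mul_lt_mul_of_pos_left (hu1 i hi) ha'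
    have h5 : b * M i u2 < b * y2 i := mul_lt_mul_of_pos_left (hu2 i hi) hb'
    have : (a • y1 + b • y2) i = a * y1 i + b * y2 i := by
      simp [Pi.add_apply, Pi.smul_apply, smul_eq_mul]
    rw [this]
    linarith
  obtain ⟨φ, hφ⟩ := geometric_hahn_banach_point_open hCconv hCopen h0C
  have hφ0 : ∀ y ∈ C, 0 < φ y := by
    intro y hy
    have := hφ y hy
    simpa using this
  set lam : Fin (m + 1) → ℝ := fun i => φ (Pi.single i 1) with hlam
  have hrep : ∀ y : Fin (m + 1) → ℝ, φ y = ∑ i, y i * lam i := by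
    intro y
    have hy := pi_eq_sum_univ y
    have hsingle : ∀ i : Fin (m + 1),
        (fun j => if i = j then (1:ℝ) else 0) = Pi.single i 1 := by
      intro i; funext j; simp [Pi.single_apply, eq_comm]
    calc φ y = φ (∑ i, y i • fun j => if i = j then (1:ℝ) else 0) := by rw [← hy]
      _ = ∑ i, y i * φ (fun j => if i = j then (1:ℝ) else 0) := by
          rw [map_sum]; simp [map_smul]
      _ = ∑ i, y i * lam i := by
          refine Finset.sum_congr rfl fun i _ => ?_
          rw [hsingle i]
  have hy0 : (fun _ => (1:ℝ)) ∈ C := hmem _ (fun i _ => one_pos)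
  have hT : 0 < ∑ i, lam i := by
    have h := hφ0 _ hy0
    rw [hrep] at h
    simpa using h
  -- lam vanishes outside A
  have hzero : ∀ j, j ∉ A → lam j = 0 := by
    intro j hj
    by_contra hne
    set t : ℝ := -((∑ i, lam i) + 1) / lam j with ht
    set z : Fin (m + 1) → ℝ := fun k => 1 + if k = j then t else 0 with hz
    have hzC : z ∈ C := by
      refine hmem _ fun i hi => ?_
      have : i ≠ j := fun h => hj (h ▸ hi)
      simp [hz, this]
    have hφz := hφ0 _ hzC
    rw [hrep] at hφz
    have hsum : ∑ i, z i * lam i = (∑ i, lam i) + t * lam j := by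
      simp only [hz, add_mul, one_mul, Finset.sum_add_distrib]
      congr 1
      rw [Finset.sum_eq_single j]
      · simp
      · intro b _ hb; simp [hb]
      · intro h; exact absurd (Finset.mem_univ j) h
    rw [hsum, ht] at hφz
    rw [div_mul_cancel₀ _ hne] at hφz
    linarith
  have hnonneg : ∀ i, 0 ≤ lam i := by
    intro i
    by_cases hiA : i ∈ A
    · by_contra hneg
      push_neg at hneg
      set t : ℝ := -((∑ k, lam k) + 1) / lam i with ht
      have htpos : 0 < t := div_pos_of_neg_of_neg (by linarith) hneg
      set z : Fin (m + 1) → ℝ := fun k => 1 + if k = i then t else 0 with hz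
      have hzC : z ∈ C := by
        refine hmem _ fun k _ => ?_
        by_cases hk : k = i
        · simp [hz, hk]; linarith
        · simp [hz, hk]
      have hφz := hφ0 _ hzC
      rw [hrep] at hφz
      have hsum : ∑ k, z k * lam k = (∑ k, lam k) + t * lam i := by
        simp only [hz, add_mul, one_mul, Finset.sum_add_distrib]
        congr 1
        rw [Finset.sum_eq_single i]
        · simp
        · intro b _ hb; simp [hb]
        · intro h; exact absurd (Finset.mem_univ i) h
      rw [hsum, ht] at hφz
      rw [div_mul_cancel₀ _ hneg.ne] at hφz
      linarith
    · exact le_of_eq (hzero i hiA).symm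
  have hlamne : lam ≠ 0 := by
    intro h
    rw [h] at hT
    simp at hT
  refine ⟨lam, hnonneg, hlamne, ?_, ?_⟩
  · intro i hi0
    by_cases hfi : f i xh = 0
    · rw [hfi, mul_zero]
    · have : i ∉ A := by
        intro h
        rcases (hmemA i).1 h with h' | h'
        · exact hi0 h'
        · exact hfi h'
      rw [hzero i this, zero_mul]
  · intro u
    by_contra hs
    push_neg at hs
    set s : ℝ := ∑ i, lam i * M i u with hsdef
    have key : ∀ ε : ℝ, 0 < ε → 0 < s + ε * ∑ i, lam i := by
      intro ε hε
      have hzC : (fun i => M i u + ε) ∈ C := ⟨u, fun i _ => lt_add_of_pos_right _ hε⟩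
      have h := hφ0 _ hzC
      rw [hrep] at h
      have : ∑ i, (M i u + ε) * lam i = s + ε * ∑ i, lam i := by
        simp only [hsdef, add_mul, Finset.sum_add_distrib, Finset.mul_sum]
        rw [Finset.sum_congr rfl fun i (_ : i ∈ Finset.univ) => mul_comm (M i u) (lam i),
          Finset.sum_congr rfl fun i (_ : i ∈ Finset.univ) => mul_comm ε (lam i)]
      rw [this] at h
      exact h
    have hslt : s < 0 := hs
    set T : ℝ := ∑ i, lam i with hTdef
    have hεpos : 0 < -s / (2 * T) := div_pos (by linarith) (by linarith)
    have h2 := key _ hεpos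
    have : -s / (2 * T) * T = -s / 2 := by
      field_simp
    rw [this] at h2
    linarith
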